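/- With notation as in the product-of-spaceforms setup (dimensions m and n, sectional curvatures μ and ν, ambient dimension m+n ≥ 3), the Weyl part of R := (μ/2) g∧g + (ν/2) h∧h equals W = [(μ+ν)/(2(m+n−1)(m+n−2))] · ( n(n−1) g∧g − 2(n−1)(m−1) g∧h + m(m−1) h∧h ), where W := R − P ∧ ḡ and P := (1/(m+n−2))(Ric − J ḡ) with Ric = tr R, J = tr Ric/(2(m+n−1)). -/
import Mathlib


open Finset

/-- Kulkarni–Nomizu product of two 2-tensors: (S∧T)_{ijkl}. -/
def KN {n : ℕ} (S T : Fin n → Fin n → ℝ) : Fin n → Fin n → Fin n → Fin n → ℝ :=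
  fun i j k l => S i k * T j l + S j l * T i k - S i l * T j k - S j k * T i l

/-- Composition of 2-tensors (as endomorphisms, indices raised by the standard metric). -/
noncomputable def comp2 {n : ℕ} (S T : Fin n → Fin n → ℝ) : Fin n → Fin n → ℝ :=
  fun i j => ∑ u, S i u * T u j

/-- Composition of curvature-type 4-tensors: (A∘B)_{ijkl} = (1/2) A_{ij}^{uv} B_{uvkl}. -/
noncomputable def comp4 {n : ℕ} (A B : Fin n → Fin n → Fin n → Fin n → ℝ) :
    Fin n → Fin n → Fin n → Fin n → ℝ :=
  fun i j k l => (1 / 2 : ℝ) * ∑ u, ∑ v, A i j u v * B u v k l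

/-- Partial (Ricci-type) trace of a 4-tensor: (tr A)_{ij} = A_{iuj}^{u}. -/
noncomputable def ptr {n : ℕ} (A : Fin n → Fin n → Fin n → Fin n → ℝ) :
    Fin n → Fin n → ℝ :=
  fun i j => ∑ u, A i u j u

/-- Full trace of a 2-tensor. -/
noncomputable def tr2 {n : ℕ} (S : Fin n → Fin n → ℝ) : ℝ := ∑ i, S i i

/-- Inner product of 2-tensors (standard metric). -/
noncomputable def inner2 {n : ℕ} (S T : Fin n → Fin n → ℝ) : ℝ := ∑ i, ∑ j, S i j * T i j

/-- The first-factor metric on ℝ^m ⊕ ℝ^n, extended by zero. -/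
def gF (m n : ℕ) : Fin (m + n) → Fin (m + n) → ℝ :=
  fun i j => if i = j ∧ (i : ℕ) < m then 1 else 0

/-- The second-factor metric on ℝ^m ⊕ ℝ^n, extended by zero. -/
def hF (m n : ℕ) : Fin (m + n) → Fin (m + n) → ℝ :=
  fun i j => if i = j ∧ m ≤ (i : ℕ) then 1 else 0

/-- The standard inner product ḡ = g + h on ℝ^{m+n}. -/
def gbar (m n : ℕ) : Fin (m + n) → Fin (m + n) → ℝ :=
  fun i j => if i = j then 1 else 0

lemma sum_gF (m n : ℕ) : ∑ u : Fin (m + n), gF m n u u = m := by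
  have h1 : ∀ u : Fin (m+n), gF m n u u = if (u:ℕ) < m then (1:ℝ) else 0 := by
    intro u; simp [gF]
  simp_rw [h1]
  rw [Fin.sum_univ_eq_sum_range (fun k => if k < m then (1:ℝ) else 0), Finset.sum_ite,
    Finset.sum_const, Finset.sum_const,
    show (Finset.range (m+n)).filter (· < m) = Finset.range m by
      ext k; simp only [Finset.mem_filter, Finset.mem_range]; omega]
  simp

lemma sum_hF (m n : ℕ) : ∑ u : Fin (m + n), hF m n u u = n := by
  have h1 : ∀ u : Fin (m+n), hF m n u u = 1 - gF m n u u := by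
    intro u
    by_cases h : (u:ℕ) < m
    · simp [gF, hF, h, (by omega : ¬ m ≤ (u:ℕ))]
    · simp [gF, hF, h, (by omega : m ≤ (u:ℕ))]
  simp_rw [h1]
  rw [Finset.sum_sub_distrib, Finset.sum_const, sum_gF]
  simp only [smul_eq_mul, mul_one, Finset.card_univ, Fintype.card_fin]
  ring

lemma gg (m n : ℕ) (i j : Fin (m+n)) : ∑ u, gF m n i u * gF m n u j = gF m n i j := by
  rw [Finset.sum_eq_single i]
  · by_cases h : (i:ℕ) < m <;> simp [gF, h]
  · intro u _ hu; simp [gF, Ne.symm hu]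
  · simp

lemma hh (m n : ℕ) (i j : Fin (m+n)) : ∑ u, hF m n i u * hF m n u j = hF m n i j := by
  rw [Finset.sum_eq_single i]
  · by_cases h : m ≤ (i:ℕ) <;> simp [hF, h]
  · intro u _ hu; simp [hF, Ne.symm hu]
  · simp

lemma gbar_eq (m n : ℕ) (i j : Fin (m+n)) : gbar m n i j = gF m n i j + hF m n i j := by
  rcases eq_or_ne i j with rfl | hne
  · by_cases h : (i:ℕ) < m
    · simp [gbar, gF, hF, h, (by omega : ¬ m ≤ (i:ℕ))]
    · simp [gbar, gF, hF, h, (by omega : m ≤ (i:ℕ))]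
  · simp [gbar, gF, hF, hne]

theorem stmt5 (m n : ℕ) (hmn : 3 ≤ m + n) (μ ν : ℝ)
    (R : Fin (m + n) → Fin (m + n) → Fin (m + n) → Fin (m + n) → ℝ)
    (hR : R = fun i j k l =>
      (μ / 2) * KN (gF m n) (gF m n) i j k l + (ν / 2) * KN (hF m n) (hF m n) i j k l)
    (Ric : Fin (m + n) → Fin (m + n) → ℝ) (hRic : Ric = ptr R)
    (J : ℝ) (hJ : J = tr2 Ric / (2 * ((m : ℝ) + n - 1)))
    (P : Fin (m + n) → Fin (m + n) → ℝ)
    (hP : P = fun i j => (Ric i j - J * gbar m n i j) / ((m : ℝ) + n - 2))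
    (W : Fin (m + n) → Fin (m + n) → Fin (m + n) → Fin (m + n) → ℝ)
    (hW : W = fun i j k l => R i j k l - KN P (gbar m n) i j k l) :
    W = fun i j k l =>
      ((μ + ν) / (2 * ((m : ℝ) + n - 1) * ((m : ℝ) + n - 2))) *
        ((n : ℝ) * ((n : ℝ) - 1) * KN (gF m n) (gF m n) i j k l
          - 2 * ((n : ℝ) - 1) * ((m : ℝ) - 1) * KN (gF m n) (hF m n) i j k l
          + (m : ℝ) * ((m : ℝ) - 1) * KN (hF m n) (hF m n) i j k l) := by
  have hRic' : Ric = fun i j =>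
      μ * ((m : ℝ) - 1) * gF m n i j + ν * ((n : ℝ) - 1) * hF m n i j := by
    rw [hRic, hR]
    funext i j
    simp only [ptr]
    have expand : ∀ u : Fin (m+n),
        (μ / 2) * KN (gF m n) (gF m n) i u j u + (ν / 2) * KN (hF m n) (hF m n) i u j u
        = (μ * gF m n i j) * gF m n u u - μ * (gF m n i u * gF m n u j)
          + ((ν * hF m n i j) * hF m n u u - ν * (hF m n i u * hF m n u j)) := by
      intro u; simp only [KN]; ring
    simp_rw [expand]
    rw [Finset.sum_add_distrib, Finset.sum_sub_distrib, Finset.sum_sub_distrib,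
      ← Finset.mul_sum, ← Finset.mul_sum, ← Finset.mul_sum, ← Finset.mul_sum,
      sum_gF, sum_hF, gg, hh]
    ring
  have hScal : tr2 Ric = μ * m * ((m : ℝ) - 1) + ν * n * ((n : ℝ) - 1) := by
    rw [hRic']
    simp only [tr2]
    rw [Finset.sum_add_distrib, ← Finset.mul_sum, ← Finset.mul_sum, sum_gF, sum_hF]
    ring
  have hJ' : J = (μ * m * ((m : ℝ) - 1) + ν * n * ((n : ℝ) - 1)) / (2 * ((m : ℝ) + n - 1)) := by
    rw [hJ, hScal]
  have hc : (3 : ℝ) ≤ (m : ℝ) + n := by exact_mod_cast hmn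
  have d1 : ((m : ℝ) + n - 1) ≠ 0 := by linarith
  have d2 : ((m : ℝ) + n - 2) ≠ 0 := by linarith
  funext i j k l
  simp only [hW, hR, hP, hRic', hJ', KN, gbar_eq]
  field_simp
  ring
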